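/- Let μ be the multiplicative Möbius-type function on s-tuples of nonzero ideals of the ring of integers O_K of a number field K, associated to a finite family {I_σ}_{σ ∈ Σ_max} of subsets of {1,...,s}. For β = (β_1,...,β_s) ∈ ℝ_{≥0}^s, define f_β = min{ ∑_i β_i e_i : (e_1,...,e_s) ≠ 0 and μ(p^{e_1},...,p^{e_s}) ≠ 0 } (independent of the prime p). If f_β > 1, then the series ∑_{d ∈ I_K^s} μ(d) / ∏_{i=1}^s N(d_i)^{β_i} converges absolutely, where N denotes the ideal norm. -/

import Mathlib

open scoped Classical

section Aux
variable {R : Type*} [CommRing R] [IsDedekindDomain R]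

lemma aux_le_prime_pow {q I : Ideal R} (hq : Prime q) {n : ℕ} :
    q ^ n ≤ I ↔ ∃ m ≤ n, I = q ^ m := by
  rw [← Ideal.dvd_iff_le, dvd_prime_pow hq]
  simp_rw [associated_iff_eq]
end Aux


section Aux2
variable {R : Type*} [CommRing R] [IsDedekindDomain R] [CharZero R]
  [Module.Free ℤ R] [Module.Finite ℤ R]

lemma aux_absNorm_two_le {P : Ideal R} (hP : P.IsPrime) (h0 : P ≠ ⊥) :
    2 ≤ Ideal.absNorm P := by
  rcases Nat.lt_or_ge (Ideal.absNorm P) 2 with h | h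
  · interval_cases h' : Ideal.absNorm P
    · exact absurd (Ideal.absNorm_eq_zero_iff.mp h') h0
    · exfalso
      have := Ideal.span_singleton_absNorm_le P
      rw [h'] at this
      simp only [Nat.cast_one, Ideal.span_singleton_one] at this
      exact hP.ne_top (top_le_iff.mp this)
  · exact h

lemma aux_card_primes_norm_eq (n : ℕ) (V : Finset (Ideal R))
    (hV : ∀ P ∈ V, P.IsPrime ∧ P ≠ ⊥ ∧ Ideal.absNorm P = n) :
    V.card ≤ Fintype.card (Module.Free.ChooseBasisIndex ℤ R) := by
  rcases V.eq_empty_or_nonempty with rfl | ⟨P₀, hP₀⟩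
  · simp
  obtain ⟨hP₀p, hP₀0, hP₀n⟩ := hV P₀ hP₀
  have hn2 : 2 ≤ n := hP₀n ▸ aux_absNorm_two_le hP₀p hP₀0
  set D := Fintype.card (Module.Free.ChooseBasisIndex ℤ R) with hD
  -- each P ∈ V divides span {(n : R)}
  have hdvd : ∏ P ∈ V, P ∣ Ideal.span {(n : R)} := by
    refine Finset.prod_primes_dvd _ (fun P hP => Ideal.prime_of_isPrime (hV P hP).2.1 (hV P hP).1)
      (fun P hP => ?_)
    rw [Ideal.dvd_iff_le, Ideal.span_le, Set.singleton_subset_iff]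
    have := Ideal.absNorm_mem P
    rwa [(hV P hP).2.2] at this
  have hnorm : Ideal.absNorm (Ideal.span {(n : R)}) = n ^ D := by
    rw [Ideal.absNorm_span_singleton]
    have : (n : R) = algebraMap ℤ R (n : ℤ) := by simp
    rw [this, Algebra.norm_algebraMap_of_basis (Module.Free.chooseBasis ℤ R)]
    push_cast [Int.natAbs_pow]
    simp [hD]
  have hprod : Ideal.absNorm (∏ P ∈ V, P) = n ^ V.card := by
    rw [map_prod]
    rw [Finset.prod_congr rfl (fun P hP => (hV P hP).2.2), Finset.prod_const]
  have hdvd' : n ^ V.card ∣ n ^ D := by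
    have := map_dvd Ideal.absNorm hdvd
    rwa [hprod, hnorm] at this
  have := Nat.le_of_dvd (Nat.pow_pos (by omega)) hdvd'
  exact (Nat.pow_le_pow_iff_right (by omega)).mp this

lemma aux_prime_zeta {t : ℝ} (ht : 1 < t) :
    ∃ Z : ℝ, 0 ≤ Z ∧ ∀ V : Finset (Ideal R), (∀ P ∈ V, P.IsPrime ∧ P ≠ ⊥) →
      ∑ P ∈ V, (Ideal.absNorm P : ℝ) ^ (-t) ≤ Z := by
  have hsum : Summable (fun n : ℕ => (n : ℝ) ^ (-t)) :=
    Real.summable_nat_rpow.mpr (by linarith)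
  set D := Fintype.card (Module.Free.ChooseBasisIndex ℤ R) with hD
  have htsum : 0 ≤ ∑' n : ℕ, (n : ℝ) ^ (-t) := tsum_nonneg (fun n => by positivity)
  refine ⟨D * ∑' n : ℕ, (n : ℝ) ^ (-t), by positivity, fun V hV => ?_⟩
  rw [← Finset.sum_fiberwise_of_maps_to (g := Ideal.absNorm)
      (t := V.image Ideal.absNorm) (fun P hP => Finset.mem_image_of_mem _ hP)]
  have h1 : ∀ n ∈ V.image Ideal.absNorm,
      ∑ P ∈ V.filter (fun P => Ideal.absNorm P = n), (Ideal.absNorm P : ℝ) ^ (-t)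
        ≤ D * (n : ℝ) ^ (-t) := by
    intro n hn
    have : ∑ P ∈ V.filter (fun P => Ideal.absNorm P = n), (Ideal.absNorm P : ℝ) ^ (-t)
        = (V.filter (fun P => Ideal.absNorm P = n)).card * (n : ℝ) ^ (-t) := by
      rw [Finset.sum_congr rfl (fun P hP => by
        rw [(Finset.mem_filter.mp hP).2]), Finset.sum_const, nsmul_eq_mul]
    rw [this]
    have hc : ((V.filter (fun P => Ideal.absNorm P = n)).card : ℝ) ≤ (D:ℝ) := by
      exact_mod_cast aux_card_primes_norm_eq n _ (fun P hP => by
        have h1 := hV P (Finset.mem_filter.mp hP).1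
        exact ⟨h1.1, h1.2, (Finset.mem_filter.mp hP).2⟩)
    have hpow : (0:ℝ) ≤ (n : ℝ) ^ (-t) := by positivity
    exact mul_le_mul_of_nonneg_right hc hpow
  calc ∑ n ∈ V.image Ideal.absNorm, ∑ P ∈ V.filter (fun P => Ideal.absNorm P = n),
        (Ideal.absNorm P : ℝ) ^ (-t)
      ≤ ∑ n ∈ V.image Ideal.absNorm, (D : ℝ) * (n : ℝ) ^ (-t) := Finset.sum_le_sum h1
    _ = (D : ℝ) * ∑ n ∈ V.image Ideal.absNorm, (n : ℝ) ^ (-t) := by rw [Finset.mul_sum]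
    _ ≤ (D : ℝ) * ∑' n : ℕ, (n : ℝ) ^ (-t) := by
        gcongr
        exact Summable.sum_le_tsum _ (fun n _ => by positivity) hsum
end Aux2

set_option maxHeartbeats 1000000 in
set_option synthInstance.maxHeartbeats 400000 in
theorem stmt_12 (K : Type*) [Field K] [NumberField K] (s : ℕ)
    (Smax : Finset (Finset (Fin s))) (hS : Smax.Nonempty)
    (μ : (Fin s → Ideal (NumberField.RingOfIntegers K)) → ℤ)
    (hmul : ∀ a b : Fin s → Ideal (NumberField.RingOfIntegers K),
      (∏ i, a i) ⊔ (∏ i, b i) = ⊤ → μ (fun i => a i * b i) = μ a * μ b)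
    (hinv : ∀ b : Fin s → Ideal (NumberField.RingOfIntegers K),
      (∀ i, b i ≠ ⊥) →
      (if Smax.sup (fun σ => ∏ i ∈ σ, b i) = ⊤ then (1 : ℤ) else 0) =
        ∑ᶠ d : Fin s → Ideal (NumberField.RingOfIntegers K),
          Set.indicator {d | ∀ i, b i ≤ d i} μ d)
    (β : Fin s → ℝ) (hβ : ∀ i, 0 ≤ β i)
    (p : Ideal (NumberField.RingOfIntegers K)) (hp : p.IsPrime) (hp0 : p ≠ ⊥)
    (hfβ : 1 < sInf {x : ℝ | ∃ e : Fin s → ℕ, e ≠ 0 ∧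
      μ (fun i => p ^ e i) ≠ 0 ∧ x = ∑ i, β i * e i}) :
    Summable (fun d : Fin s → {I : Ideal (NumberField.RingOfIntegers K) // I ≠ ⊥} =>
      |(μ (fun i => (d i).1) : ℝ)| *
        ∏ i, (Ideal.absNorm (d i).1 : ℝ) ^ (-(β i))) := by
  set R := NumberField.RingOfIntegers K
  have hpP : Prime p := Ideal.prime_of_isPrime hp0 hp
  have norm2 : ∀ {q : Ideal R}, Prime q → 2 ≤ Ideal.absNorm q := by
    intro q hq
    rcases Nat.lt_or_ge (Ideal.absNorm q) 2 with h' | h'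
    · interval_cases hn : Ideal.absNorm q
      · exact absurd (Ideal.absNorm_eq_zero_iff.mp hn) hq.ne_zero
      · exfalso
        have h3 := Ideal.span_singleton_absNorm_le q
        rw [hn] at h3
        simp only [Nat.cast_one, Ideal.span_singleton_one] at h3
        exact (Ideal.isPrime_of_prime hq).ne_top (top_le_iff.mp h3)
    · exact h'
  have pow_inj : ∀ {q : Ideal R}, Prime q → ∀ {a b : ℕ}, q ^ a = q ^ b → a = b := by
    intro q hq a b h
    have h2 : 2 ≤ Ideal.absNorm q := norm2 hq
    have h3 : Ideal.absNorm (q ^ a) = Ideal.absNorm (q ^ b) := by rw [h]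
    rw [map_pow, map_pow] at h3
    exact Nat.pow_right_injective h2 h3
  have SUM : ∀ q : Ideal R, Prime q → ∀ n : Fin s → ℕ,
      (if ∃ σ ∈ Smax, ∀ i ∈ σ, n i = 0 then (1 : ℤ) else 0)
        = ∑ m ∈ Finset.Iic n, μ (fun i => q ^ m i) := by
    intro q hq n
    have hqtop : q ≠ ⊤ := (Ideal.isPrime_of_prime hq).ne_top
    have h := hinv (fun i => q ^ n i) (fun i => by
      rw [← Ideal.zero_eq_bot]; exact pow_ne_zero (n i) hq.ne_zero)
    beta_reduce at h
    have hLHS : (Smax.sup (fun σ => ∏ i ∈ σ, q ^ n i) = ⊤) ↔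
        ∃ σ ∈ Smax, ∀ i ∈ σ, n i = 0 := by
      constructor
      · intro htop
        by_contra hcon
        push_neg at hcon
        have : Smax.sup (fun σ => ∏ i ∈ σ, q ^ n i) ≤ q := by
          refine Finset.sup_le fun σ hσ => ?_
          obtain ⟨i, hiσ, hi⟩ := hcon σ hσ
          have hprod : ∏ j ∈ σ, q ^ n j = q ^ ∑ j ∈ σ, n j :=
            Finset.prod_pow_eq_pow_sum σ n q
          rw [hprod]
          refine Ideal.pow_le_self ?_
          have hle : n i ≤ ∑ j ∈ σ, n j :=
            Finset.single_le_sum (f := n) (fun j _ => Nat.zero_le _) hiσ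
          have : 0 < n i := Nat.pos_of_ne_zero hi
          exact (lt_of_lt_of_le this hle).ne'
        rw [htop] at this
        exact hqtop (top_le_iff.mp this)
      · rintro ⟨σ, hσ, hzero⟩
        refine top_le_iff.mp ?_
        have : ∏ i ∈ σ, q ^ n i = ⊤ := by
          rw [Finset.prod_congr rfl (fun i hi => by rw [hzero i hi, pow_zero])]
          rw [Finset.prod_const, ← Ideal.one_eq_top, one_pow]
        calc (⊤ : Ideal R) = ∏ i ∈ σ, q ^ n i := this.symm
          _ ≤ _ := Finset.le_sup (f := fun σ => ∏ i ∈ σ, q ^ n i) hσ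
    have hinj : Set.InjOn (fun m : Fin s → ℕ => (fun i => q ^ m i : Fin s → Ideal R))
        ↑(Finset.Iic n) := by
      intro m1 _ m2 _ hm
      funext i
      exact pow_inj hq (congrFun hm i)
    have hset : {d : Fin s → Ideal R | ∀ i, q ^ n i ≤ d i}
        = ↑((Finset.Iic n).image (fun m => (fun i => q ^ m i))) := by
      ext d
      simp only [Set.mem_setOf_eq, Finset.coe_image, Set.mem_image, Finset.mem_coe,
        Finset.mem_Iic]
      constructor
      · intro hd
        have : ∀ i, ∃ m ≤ n i, d i = q ^ m := fun i => (aux_le_prime_pow hq).mp (hd i)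
        choose m hm1 hm2 using this
        exact ⟨m, fun i => hm1 i, by funext i; exact (hm2 i).symm⟩
      · rintro ⟨m, hmn, rfl⟩
        intro i
        exact Ideal.pow_le_pow_right (hmn i)
    have hif : (if ∃ σ ∈ Smax, ∀ i ∈ σ, n i = 0 then (1 : ℤ) else 0)
        = (if Smax.sup (fun σ => ∏ i ∈ σ, q ^ n i) = ⊤ then (1 : ℤ) else 0) := by
      simp only [hLHS]
    rw [hif, h, ← finsum_mem_def, hset, finsum_mem_coe_finset,
      Finset.sum_image (fun m1 h1 m2 h2 hm => hinj h1 h2 hm)]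
  -- values at prime powers don't depend on the prime
  have INDEP : ∀ q : Ideal R, Prime q → ∀ n : Fin s → ℕ,
      μ (fun i => q ^ n i) = μ (fun i => p ^ n i) := by
    intro q hq
    suffices h : ∀ N : ℕ, ∀ n : Fin s → ℕ, (∑ i, n i) ≤ N →
        μ (fun i => q ^ n i) = μ (fun i => p ^ n i) by
      intro n; exact h (∑ i, n i) n le_rfl
    intro N
    induction N with
    | zero =>
      intro n hn
      have : ∀ i, n i = 0 := by
        intro i
        have := Finset.single_le_sum (f := n) (fun j _ => Nat.zero_le _)
          (Finset.mem_univ i)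
        omega
      have he : (fun i => q ^ n i) = (fun i => p ^ n i) := by
        funext i; rw [this i, pow_zero, pow_zero]
      rw [he]
    | succ N IH =>
      intro n hn
      have hq' := SUM q hq n
      have hp' := SUM p hpP n
      have hsum : ∑ m ∈ Finset.Iic n, μ (fun i => q ^ m i)
          = ∑ m ∈ Finset.Iic n, μ (fun i => p ^ m i) := hq'.symm.trans hp'
      have hmem : n ∈ Finset.Iic n := Finset.mem_Iic.mpr le_rfl
      rw [← Finset.sum_erase_add _ _ hmem, ← Finset.sum_erase_add _ _ hmem] at hsum
      have herase : ∑ m ∈ (Finset.Iic n).erase n, μ (fun i => q ^ m i)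
          = ∑ m ∈ (Finset.Iic n).erase n, μ (fun i => p ^ m i) := by
        refine Finset.sum_congr rfl fun m hm => ?_
        obtain ⟨hne, hle⟩ := Finset.mem_erase.mp hm
        rw [Finset.mem_Iic] at hle
        refine IH m ?_
        have hlt : ∑ i, m i < ∑ i, n i := by
          obtain ⟨i, hi⟩ := Function.ne_iff.mp hne
          refine Finset.sum_lt_sum (fun j _ => hle j) ⟨i, Finset.mem_univ i, ?_⟩
          exact lt_of_le_of_ne (hle i) hi
        exact Nat.lt_succ_iff.mp (lt_of_lt_of_le hlt hn)
      rw [herase] at hsum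
      exact add_left_cancel hsum
  -- μ vanishes on non-squarefree prime powers
  have SQFREE : ∀ q : Ideal R, Prime q → ∀ n : Fin s → ℕ, (∃ i, 2 ≤ n i) →
      μ (fun i => q ^ n i) = 0 := by
    intro q hq
    suffices h : ∀ N : ℕ, ∀ n : Fin s → ℕ, (∑ i, n i) ≤ N → (∃ i, 2 ≤ n i) →
        μ (fun i => q ^ n i) = 0 by
      intro n; exact h (∑ i, n i) n le_rfl
    intro N
    induction N with
    | zero =>
      rintro n hn ⟨i, hi⟩
      have := Finset.single_le_sum (f := n) (fun j _ => Nat.zero_le _) (Finset.mem_univ i)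
      omega
    | succ N IH =>
      rintro n hn ⟨i₀, hi₀⟩
      set n' := Function.update n i₀ (n i₀ - 1) with hn'
      have hn'le : n' ≤ n := by
        intro i
        by_cases h : i = i₀
        · subst h; simp [hn', Function.update_self]
        · simp [hn', Function.update_of_ne h]
      have hzero_iff : ∀ i, (n i = 0 ↔ n' i = 0) := by
        intro i
        by_cases h : i = i₀
        · subst h; simp [hn', Function.update_self]; omega
        · simp [hn', Function.update_of_ne h]
      have hq1 := SUM q hq n
      have hq2 := SUM q hq n'
      have hifeq : (if ∃ σ ∈ Smax, ∀ i ∈ σ, n i = 0 then (1 : ℤ) else 0)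
          = (if ∃ σ ∈ Smax, ∀ i ∈ σ, n' i = 0 then (1 : ℤ) else 0) := by
        have : (∃ σ ∈ Smax, ∀ i ∈ σ, n i = 0) ↔ (∃ σ ∈ Smax, ∀ i ∈ σ, n' i = 0) := by
          constructor
          · rintro ⟨σ, hσ, hz⟩; exact ⟨σ, hσ, fun i hi => (hzero_iff i).mp (hz i hi)⟩
          · rintro ⟨σ, hσ, hz⟩; exact ⟨σ, hσ, fun i hi => (hzero_iff i).mpr (hz i hi)⟩
        simp only [this]
      have hsum : ∑ m ∈ Finset.Iic n, μ (fun i => q ^ m i)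
          = ∑ m ∈ Finset.Iic n', μ (fun i => q ^ m i) := by
        rw [← hq1, ← hq2, hifeq]
      have hsubset : Finset.Iic n' ⊆ Finset.Iic n := Finset.Iic_subset_Iic.mpr hn'le
      have hdiff : ∑ m ∈ Finset.Iic n \ Finset.Iic n', μ (fun i => q ^ m i) = 0 := by
        have h4 := Finset.sum_sdiff (f := fun m => μ (fun i => q ^ m i)) hsubset
        rw [hsum] at h4
        have := add_right_cancel (h4.trans (zero_add _).symm)
        exact this
      have hmemn : n ∈ Finset.Iic n \ Finset.Iic n' := by
        rw [Finset.mem_sdiff, Finset.mem_Iic, Finset.mem_Iic]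
        refine ⟨le_rfl, fun hc => ?_⟩
        have h5 := hc i₀
        simp only [hn', Function.update_self] at h5
        have h2 : 0 < n i₀ := Nat.lt_of_lt_of_le Nat.zero_lt_two hi₀
        exact absurd h5 (Nat.not_le.mpr (Nat.sub_lt h2 Nat.one_pos))
      rw [← Finset.sum_erase_add _ _ hmemn] at hdiff
      have herase : ∑ m ∈ (Finset.Iic n \ Finset.Iic n').erase n, μ (fun i => q ^ m i) = 0 := by
        refine Finset.sum_eq_zero fun m hm => ?_
        obtain ⟨hne, hmem⟩ := Finset.mem_erase.mp hm
        rw [Finset.mem_sdiff, Finset.mem_Iic, Finset.mem_Iic] at hmem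
        obtain ⟨hle, hnle⟩ := hmem
        have hm2 : 2 ≤ m i₀ := by
          by_contra hc
          refine hnle fun i => ?_
          by_cases h : i = i₀
          · subst h
            simp only [hn', Function.update_self]
            exact Nat.le_pred_of_lt (lt_of_lt_of_le (Nat.not_le.mp hc) hi₀)
          · simp only [hn', Function.update_of_ne h]
            exact hle i
        refine IH m ?_ ⟨i₀, hm2⟩
        have hlt : ∑ i, m i < ∑ i, n i := by
          obtain ⟨i, hi⟩ := Function.ne_iff.mp hne
          refine Finset.sum_lt_sum (fun j _ => hle j) ⟨i, Finset.mem_univ i, ?_⟩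
          exact lt_of_le_of_ne (hle i) hi
        exact Nat.lt_succ_iff.mp (lt_of_lt_of_le hlt hn)
      rw [herase, zero_add] at hdiff
      exact hdiff
  have FACT : ∀ N : ℕ, ∀ a : Fin s → Ideal R, (∀ i, a i ≠ 0) →
      Ideal.absNorm (∏ i, a i) ≤ N →
      ∃ (S : Finset (Ideal R)) (e : Ideal R → Fin s → ℕ),
        (∀ P ∈ S, Prime P) ∧ (∀ i, a i = ∏ P ∈ S, P ^ e P i) ∧
        (∀ P ∈ S, e P ≠ 0) ∧ μ a = ∏ P ∈ S, μ (fun i => P ^ e P i) := by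
    intro N
    induction N with
    | zero =>
      intro a ha hN
      exfalso
      have h0 : Ideal.absNorm (∏ i, a i) = 0 := Nat.le_zero.mp hN
      rw [Ideal.absNorm_eq_zero_iff, ← Ideal.zero_eq_bot] at h0
      obtain ⟨i, _, hi⟩ := Finset.prod_eq_zero_iff.mp h0
      exact ha i hi
    | succ N IH =>
      intro a ha hN
      by_cases htop : ∀ i, a i = ⊤
      · refine ⟨∅, fun _ _ => 0, by simp, fun i => by
          rw [htop i, Finset.prod_empty, Ideal.one_eq_top], by simp, ?_⟩
        rw [Finset.prod_empty]
        have hs0 := SUM p hpP 0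
        have hIic : Finset.Iic (0 : Fin s → ℕ) = {0} := by
          ext m
          simp only [Finset.mem_Iic, Finset.mem_singleton]
          exact ⟨fun h => nonpos_iff_eq_zero.mp h, fun h => h ▸ le_rfl⟩
        rw [hIic, Finset.sum_singleton,
          if_pos ⟨hS.choose, hS.choose_spec, fun i _ => rfl⟩] at hs0
        have hae : a = (fun i => p ^ (0 : Fin s → ℕ) i) := by
          funext i
          rw [htop i, Pi.zero_apply, pow_zero, Ideal.one_eq_top]
        rw [hae, ← hs0]
      · push_neg at htop
        obtain ⟨i₀, hi₀⟩ := htop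
        obtain ⟨P, hPirr, hPdvd⟩ := WfDvdMonoid.exists_irreducible_factor
          (mt Ideal.isUnit_iff.mp hi₀) (ha i₀)
        have hPp : Prime P := UniqueFactorizationMonoid.irreducible_iff_prime.mp hPirr
        choose k c hc1 hc2 using fun j => WfDvdMonoid.max_power_factor (ha j) hPirr
        have hc0 : ∀ j, c j ≠ 0 := by
          intro j h0
          exact ha j (by rw [hc2 j, h0, mul_zero])
        have hki₀ : k i₀ ≠ 0 := by
          intro h0
          refine hc1 i₀ ?_
          have := hc2 i₀
          rw [h0, pow_zero, one_mul] at this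
          exact this ▸ hPdvd
        have hPnc : ¬ P ∣ ∏ i, c i := by
          intro hdvd
          obtain ⟨j, _, hj⟩ := (Prime.dvd_finset_prod_iff hPp c).mp hdvd
          exact hc1 j hj
        have hPmax : P.IsMaximal :=
          Ideal.IsPrime.isMaximal (Ideal.isPrime_of_prime hPp) (by
            simpa using hPp.ne_zero)
        have hsup1 : P ⊔ (∏ i, c i) = ⊤ := by
          by_contra hne
          have := hPmax.eq_of_le hne le_sup_left
          refine hPnc (Ideal.dvd_iff_le.mpr ?_)
          rw [this]
          exact le_sup_right
        have hsup : (∏ i, P ^ k i) ⊔ (∏ i, c i) = ⊤ := by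
          rw [Finset.prod_pow_eq_pow_sum]
          exact Ideal.isCoprime_iff_sup_eq.mp
            ((Ideal.isCoprime_iff_sup_eq.mpr hsup1).pow_left)
        -- norm decrease
        have hprodsplit : ∏ i, a i = P ^ (∑ i, k i) * ∏ i, c i := by
          rw [Finset.prod_congr rfl (fun i _ => hc2 i), Finset.prod_mul_distrib,
            Finset.prod_pow_eq_pow_sum]
        have hcnorm : Ideal.absNorm (∏ i, c i) ≤ N := by
          have h1 : Ideal.absNorm (∏ i, a i)
              = Ideal.absNorm P ^ (∑ i, k i) * Ideal.absNorm (∏ i, c i) := by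
            rw [hprodsplit, map_mul, map_pow]
          have h2 : 2 ≤ Ideal.absNorm P ^ (∑ i, k i) := by
            calc 2 = 2 ^ 1 := rfl
              _ ≤ 2 ^ (∑ i, k i) := Nat.pow_le_pow_right (by norm_num) (by
                  have := Finset.single_le_sum (f := k) (fun j _ => Nat.zero_le _)
                    (Finset.mem_univ i₀)
                  omega)
              _ ≤ Ideal.absNorm P ^ (∑ i, k i) := Nat.pow_le_pow_left (norm2 hPp) _
          have h3 : Ideal.absNorm (∏ i, c i) ≠ 0 := by
            rw [Ne, Ideal.absNorm_eq_zero_iff, ← Ideal.zero_eq_bot]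
            intro h0
            obtain ⟨j, _, hj⟩ := Finset.prod_eq_zero_iff.mp h0
            exact hc0 j hj
          set A := Ideal.absNorm (∏ i, c i)
          set B := Ideal.absNorm P ^ (∑ i, k i)
          have h4 : 2 * A ≤ B * A := Nat.mul_le_mul_right A h2
          rw [h1] at hN
          omega
        obtain ⟨S', e', hS'p, hS'eq, hS'ne, hS'mul⟩ := IH c hc0 hcnorm
        have hPS' : P ∉ S' := by
          intro hmem
          obtain ⟨i, hi⟩ := Function.ne_iff.mp (hS'ne P hmem)
          have hne : e' P i ≠ 0 := by simpa using hi
          have hdvd1 : P ∣ P ^ e' P i := dvd_pow_self P hne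
          have hdvd2 : P ^ e' P i ∣ c i := by
            rw [hS'eq i]
            exact Finset.dvd_prod_of_mem (fun Q => Q ^ e' Q i) hmem
          exact hc1 i (hdvd1.trans hdvd2)
        refine ⟨insert P S', Function.update e' P k, ?_, ?_, ?_, ?_⟩
        · intro Q hQ
          rcases Finset.mem_insert.mp hQ with rfl | hQ
          · exact hPp
          · exact hS'p Q hQ
        · intro i
          rw [Finset.prod_insert hPS', Function.update_self, hc2 i, hS'eq i]
          congr 1
          refine Finset.prod_congr rfl fun Q hQ => ?_
          have hQP : Q ≠ P := by rintro rfl; exact hPS' hQ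
          rw [Function.update_of_ne hQP k e']
        · intro Q hQ
          rcases Finset.mem_insert.mp hQ with rfl | hQS
          · rw [Function.update_self]
            exact fun h => hki₀ (by simpa using congrFun h i₀)
          · have hQP : Q ≠ P := by rintro rfl; exact hPS' hQS
            rw [Function.update_of_ne hQP k e']
            exact hS'ne Q hQS
        · have haeq : a = fun i => (fun i => P ^ k i) i * c i := by
            funext i; exact hc2 i
          have hprodc : ∏ Q ∈ S', μ (fun i => Q ^ Function.update e' P k Q i)
              = ∏ Q ∈ S', μ (fun i => Q ^ e' Q i) := by
            refine Finset.prod_congr rfl fun Q hQ => ?_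
            have hQP : Q ≠ P := by rintro rfl; exact hPS' hQ
            rw [Function.update_of_ne hQP k e']
          rw [haeq, hmul (fun i => P ^ k i) c hsup, Finset.prod_insert hPS',
            Function.update_self, hprodc, ← hS'mul]
  -- constants
  have ht1 : 1 < sInf {x : ℝ | ∃ e : Fin s → ℕ, e ≠ 0 ∧
      μ (fun i => p ^ e i) ≠ 0 ∧ x = ∑ i, β i * e i} := hfβ
  set t := sInf {x : ℝ | ∃ e : Fin s → ℕ, e ≠ 0 ∧
      μ (fun i => p ^ e i) ≠ 0 ∧ x = ∑ i, β i * e i} with ht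
  have htle : ∀ e : Fin s → ℕ, e ≠ 0 → μ (fun i => p ^ e i) ≠ 0 →
      t ≤ ∑ i, β i * e i := by
    intro e he hμ
    refine csInf_le ⟨0, ?_⟩ ⟨e, he, hμ, rfl⟩
    rintro x ⟨e', he', hμ', rfl⟩
    exact Finset.sum_nonneg fun i _ => mul_nonneg (hβ i) (Nat.cast_nonneg _)
  set Efin : Finset (Fin s → ℕ) := Finset.Iic 1 with hEfin
  set B : ℝ := ∑ e ∈ Efin, |(μ (fun i => p ^ e i) : ℝ)| with hB
  have hB0 : 0 ≤ B := Finset.sum_nonneg (fun _ _ => abs_nonneg _)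
  have hBle : ∀ e ∈ Efin, |(μ (fun i => p ^ e i) : ℝ)| ≤ B := by
    intro e he
    rw [hB]
    exact Finset.single_le_sum (f := fun e => |(μ (fun i => p ^ e i) : ℝ)|)
      (fun _ _ => abs_nonneg _) he
  obtain ⟨Z, hZ0, hZ⟩ := aux_prime_zeta (R := R) ht1
  set W : Ideal R × (Fin s → ℕ) → ℝ :=
    fun x => B * (Ideal.absNorm x.1 : ℝ) ^ (-t) with hW
  have hW0 : ∀ x, 0 ≤ W x :=
    fun x => mul_nonneg hB0 (Real.rpow_nonneg (Nat.cast_nonneg _) _)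
  -- factorization data for every tuple of nonzero ideals
  have hFACT : ∀ d : Fin s → {I : Ideal R // I ≠ ⊥},
      ∃ (S : Finset (Ideal R)) (e : Ideal R → Fin s → ℕ),
        (∀ P ∈ S, Prime P) ∧ (∀ i, (d i).1 = ∏ P ∈ S, P ^ e P i) ∧
        (∀ P ∈ S, e P ≠ 0) ∧
        μ (fun i => (d i).1) = ∏ P ∈ S, μ (fun i => P ^ e P i) := by
    intro d
    exact FACT (Ideal.absNorm (∏ i, (d i).1)) (fun i => (d i).1)
      (fun i => by rw [Ideal.zero_eq_bot]; exact (d i).2) le_rfl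
  choose Sd ed hprime heq hene hmu using hFACT
  set Φ : (Fin s → {I : Ideal R // I ≠ ⊥}) → Finset (Ideal R × (Fin s → ℕ)) :=
    fun d => (Sd d).image (fun P => (P, ed d P)) with hΦ
  have hpairinj : ∀ d, ∀ x ∈ Sd d, ∀ y ∈ Sd d,
      (x, ed d x) = (y, ed d y) → x = y :=
    fun d x _ y _ h => congrArg Prod.fst h
  have hrec : ∀ d, ∀ i, (d i).1 = ∏ x ∈ Φ d, x.1 ^ x.2 i := by
    intro d i
    rw [hΦ]
    rw [Finset.prod_image (hpairinj d)]
    exact heq d i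
  have hΦinj : Function.Injective Φ := by
    intro d1 d2 h
    funext i
    refine Subtype.ext ?_
    rw [hrec d1 i, hrec d2 i, h]
  set F : (Fin s → {I : Ideal R // I ≠ ⊥}) → ℝ :=
    fun d => |(μ (fun i => (d i).1) : ℝ)| *
      ∏ i, (Ideal.absNorm (d i).1 : ℝ) ^ (-(β i)) with hF
  have hF0 : ∀ d, 0 ≤ F d := fun d =>
    mul_nonneg (abs_nonneg _) (Finset.prod_nonneg fun i _ =>
      Real.rpow_nonneg (Nat.cast_nonneg _) _)
  -- key pointwise bound
  have hkey : ∀ d, μ (fun i => (d i).1) ≠ 0 →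
      (∀ x ∈ Φ d, Prime x.1 ∧ x.2 ∈ Efin) ∧ F d ≤ ∏ x ∈ Φ d, W x := by
    intro d hμ0
    have hfac : ∀ P ∈ Sd d, μ (fun i => P ^ ed d P i) ≠ 0 := by
      intro P hP
      have := hmu d ▸ hμ0
      exact Finset.prod_ne_zero_iff.mp this P hP
    have hle1 : ∀ P ∈ Sd d, ed d P ∈ Efin := by
      intro P hP
      rw [hEfin, Finset.mem_Iic]
      intro i
      have h1i : (1 : Fin s → ℕ) i = 1 := rfl
      rw [h1i]
      by_contra hc
      push_neg at hc
      exact hfac P hP (SQFREE P (hprime d P hP) (ed d P) ⟨i, hc⟩)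
    have hmem : ∀ x ∈ Φ d, Prime x.1 ∧ x.2 ∈ Efin := by
      intro x hx
      rw [hΦ] at hx
      obtain ⟨P, hP, rfl⟩ := Finset.mem_image.mp hx
      exact ⟨hprime d P hP, hle1 P hP⟩
    refine ⟨hmem, ?_⟩
    have hxpos : ∀ P ∈ Sd d, (0:ℝ) < (Ideal.absNorm P : ℝ) := by
      intro P hP
      have := norm2 (hprime d P hP)
      positivity
    have hx1 : ∀ P ∈ Sd d, (1:ℝ) ≤ (Ideal.absNorm P : ℝ) := by
      intro P hP
      have h2 := norm2 (hprime d P hP)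
      have h2' : (2:ℝ) ≤ (Ideal.absNorm P : ℝ) := by exact_mod_cast h2
      linarith
    have hnorm_i : ∀ i, ((Ideal.absNorm (d i).1 : ℝ)) ^ (-(β i))
        = ∏ P ∈ Sd d, (Ideal.absNorm P : ℝ) ^ (-(β i * ed d P i)) := by
      intro i
      have h0 : Ideal.absNorm ((d i).1)
          = ∏ P ∈ Sd d, Ideal.absNorm P ^ ed d P i := by
        rw [heq d i, map_prod]
        exact Finset.prod_congr rfl fun P _ => map_pow _ _ _
      have h1 : ((Ideal.absNorm (d i).1 : ℕ) : ℝ)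
          = ∏ P ∈ Sd d, ((Ideal.absNorm P : ℝ)) ^ (ed d P i) := by
        rw [h0]
        push_cast
        rfl
      have h1' : ((Ideal.absNorm (d i).1 : ℕ) : ℝ)
          = ∏ P ∈ Sd d, ((Ideal.absNorm P : ℝ)) ^ ((ed d P i : ℕ) : ℝ) := by
        rw [h1]
        exact Finset.prod_congr rfl fun P _ => (Real.rpow_natCast _ _).symm
      rw [h1', ← Real.finset_prod_rpow _ _
        (fun P hP => Real.rpow_nonneg (Nat.cast_nonneg _) _) (-(β i))]
      refine Finset.prod_congr rfl fun P hP => ?_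
      rw [← Real.rpow_mul (le_of_lt (hxpos P hP))]
      congr 1
      ring
    have hFprod : F d = ∏ P ∈ Sd d, (|(μ (fun i => P ^ ed d P i) : ℝ)| *
        (Ideal.absNorm P : ℝ) ^ (-(∑ i, β i * ed d P i))) := by
      have habs : |(μ (fun i => (d i).1) : ℝ)|
          = ∏ P ∈ Sd d, |(μ (fun i => P ^ ed d P i) : ℝ)| := by
        rw [hmu d]
        push_cast
        rw [Finset.abs_prod]
      have hnormp : ∏ i, (Ideal.absNorm (d i).1 : ℝ) ^ (-(β i))
          = ∏ P ∈ Sd d, (Ideal.absNorm P : ℝ) ^ (-(∑ i, β i * ed d P i)) := by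
        rw [Finset.prod_congr rfl (fun i _ => hnorm_i i), Finset.prod_comm]
        refine Finset.prod_congr rfl fun P hP => ?_
        rw [← Real.rpow_sum_of_pos (hxpos P hP) (fun i => -(β i * ed d P i)) Finset.univ]
        congr 1
        exact Finset.sum_neg_distrib _
      simp only [hF]
      rw [habs, hnormp, ← Finset.prod_mul_distrib]
    rw [hΦ]
    rw [Finset.prod_image (hpairinj d), hFprod]
    simp only [hW]
    refine Finset.prod_le_prod (fun P hP => mul_nonneg (abs_nonneg _)
      (Real.rpow_nonneg (Nat.cast_nonneg _) _)) (fun P hP => ?_)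
    have h1 : |(μ (fun i => P ^ ed d P i) : ℝ)| ≤ B := by
      have hμeq : ((μ (fun i => P ^ ed d P i) : ℤ) : ℝ)
          = ((μ (fun i => p ^ ed d P i) : ℤ) : ℝ) := by
        exact_mod_cast INDEP P (hprime d P hP) (ed d P)
      rw [hμeq]
      exact hBle _ (hle1 P hP)
    have h2 : (Ideal.absNorm P : ℝ) ^ (-(∑ i, β i * ed d P i))
        ≤ (Ideal.absNorm P : ℝ) ^ (-t) := by
      refine Real.rpow_le_rpow_of_exponent_le (hx1 P hP) ?_
      have hμp : μ (fun i => p ^ ed d P i) ≠ 0 := by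
        rw [← INDEP P (hprime d P hP)]
        exact hfac P hP
      have := htle (ed d P) (hene d P hP) hμp
      linarith
    exact mul_le_mul h1 h2 (Real.rpow_nonneg (Nat.cast_nonneg _) _) hB0
  -- partial sums are uniformly bounded
  have key : ∀ u : Finset (Fin s → {I : Ideal R // I ≠ ⊥}),
      ∑ d ∈ u, F d ≤ Real.exp ((Efin.card : ℝ) * (B * Z)) := by
    intro u
    set u' := u.filter (fun d => μ (fun i => (d i).1) ≠ 0) with hu'
    have hstep0 : ∑ d ∈ u, F d = ∑ d ∈ u', F d := by
      rw [hu']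
      refine (Finset.sum_filter_of_ne ?_).symm
      intro d _ hFd
      intro hμ0
      refine hFd ?_
      rw [hF]
      simp only [hμ0, Int.cast_zero, abs_zero, zero_mul]
    set U : Finset (Ideal R × (Fin s → ℕ)) := (u'.image Φ).sup id with hU
    have hTsub : ∀ T ∈ u'.image Φ, T ⊆ U := by
      intro T hT
      exact Finset.le_sup (f := id) hT
    have hUmem : ∀ x ∈ U, Prime x.1 ∧ x.2 ∈ Efin := by
      intro x hx
      rw [hU] at hx
      obtain ⟨T, hT, hxT⟩ := Finset.mem_sup.mp hx
      obtain ⟨d, hd, rfl⟩ := Finset.mem_image.mp hT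
      have hμ0 : μ (fun i => (d i).1) ≠ 0 := (Finset.mem_filter.mp hd).2
      exact (hkey d hμ0).1 x hxT
    calc ∑ d ∈ u, F d = ∑ d ∈ u', F d := hstep0
      _ ≤ ∑ d ∈ u', ∏ x ∈ Φ d, W x := by
          refine Finset.sum_le_sum fun d hd => ?_
          exact (hkey d (Finset.mem_filter.mp hd).2).2
      _ = ∑ T ∈ u'.image Φ, ∏ x ∈ T, W x := by
          rw [Finset.sum_image (fun d1 _ d2 _ h => hΦinj h)]
      _ ≤ ∑ T ∈ U.powerset, ∏ x ∈ T, W x := by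
          refine Finset.sum_le_sum_of_subset_of_nonneg ?_ ?_
          · intro T hT
            exact Finset.mem_powerset.mpr (hTsub T hT)
          · intro T _ _
            exact Finset.prod_nonneg fun x _ => hW0 x
      _ = ∏ x ∈ U, (W x + 1) := by
          rw [Finset.prod_add]
          refine Finset.sum_congr rfl fun T hT => ?_
          rw [Finset.prod_const_one, mul_one]
      _ ≤ ∏ x ∈ U, Real.exp (W x) := by
          refine Finset.prod_le_prod (fun x _ => by positivity) (fun x _ => ?_)
          have := Real.add_one_le_exp (W x)
          linarith
      _ = Real.exp (∑ x ∈ U, W x) := by rw [← Real.exp_sum]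
      _ ≤ Real.exp ((Efin.card : ℝ) * (B * Z)) := by
          refine Real.exp_le_exp.mpr ?_
          have hsubU : U ⊆ (U.image Prod.fst) ×ˢ Efin := by
            intro x hx
            rw [Finset.mem_product]
            exact ⟨Finset.mem_image_of_mem _ hx, (hUmem x hx).2⟩
          calc ∑ x ∈ U, W x ≤ ∑ x ∈ (U.image Prod.fst) ×ˢ Efin, W x := by
                refine Finset.sum_le_sum_of_subset_of_nonneg hsubU fun x _ _ => hW0 x
            _ = ∑ P ∈ U.image Prod.fst, ∑ e ∈ Efin, B * (Ideal.absNorm P : ℝ) ^ (-t) := by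
                rw [Finset.sum_product]
            _ = (Efin.card : ℝ) * ∑ P ∈ U.image Prod.fst, B * (Ideal.absNorm P : ℝ) ^ (-t) := by
                rw [Finset.mul_sum]
                refine Finset.sum_congr rfl fun P _ => ?_
                rw [Finset.sum_const, nsmul_eq_mul]
            _ ≤ (Efin.card : ℝ) * (B * Z) := by
                have hprimes : ∀ P ∈ U.image Prod.fst, P.IsPrime ∧ P ≠ ⊥ := by
                  intro P hP
                  obtain ⟨x, hx, rfl⟩ := Finset.mem_image.mp hP
                  have hpr := (hUmem x hx).1
                  exact ⟨Ideal.isPrime_of_prime hpr, by simpa using hpr.ne_zero⟩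
                have := hZ (U.image Prod.fst) hprimes
                have hsum : ∑ P ∈ U.image Prod.fst, B * (Ideal.absNorm P : ℝ) ^ (-t)
                    = B * ∑ P ∈ U.image Prod.fst, (Ideal.absNorm P : ℝ) ^ (-t) := by
                  rw [Finset.mul_sum]
                rw [hsum]
                have hBZ : B * ∑ P ∈ U.image Prod.fst, (Ideal.absNorm P : ℝ) ^ (-t) ≤ B * Z :=
                  mul_le_mul_of_nonneg_left this hB0
                have hcard : (0:ℝ) ≤ (Efin.card : ℝ) := Nat.cast_nonneg _
                exact mul_le_mul_of_nonneg_left hBZ hcard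
  exact summable_of_sum_le (fun d => hF0 d) key
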